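/- Let L be a lower semicontinuous Lipschitz seminorm on an order-unit space A, with metric ρ_L on S(A). Then L is recovered from ρ_L: for every a ∈ A, L(a) = sup{|μ(a) - ν(a)|/ρ_L(μ,ν) : μ, ν ∈ S(A), μ ≠ ν}. -/

import Mathlib

open scoped ENNReal

/-- A state of an order-unit space `(A, e)`. -/
def IsState {A : Type*} [NormedAddCommGroup A] [NormedSpace ℝ A] (e : A)
    (μ : A →L[ℝ] ℝ) : Prop :=
  μ e = 1 ∧ ‖μ‖ = 1

/-- The metric `ρ_L` on the state space: `ρ_L(μ,ν) = sup {|μ(a) - ν(a)| : L(a) ≤ 1}`. -/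
noncomputable def rhoL {A : Type*} [NormedAddCommGroup A] [NormedSpace ℝ A]
    (L : A → ℝ) (μ ν : A →L[ℝ] ℝ) : ℝ≥0∞ :=
  ⨆ (a : A) (_ : L a ≤ 1), ENNReal.ofReal |μ a - ν a|

/-- A lower semicontinuous Lipschitz seminorm `L` is recovered
from its metric `ρ_L`: for every `a`,
`L(a) = sup {|μ(a) - ν(a)|/ρ_L(μ,ν) : μ, ν ∈ S(A), μ ≠ ν}`. -/
theorem exists_state_sub {A : Type*} [NormedAddCommGroup A] [NormedSpace ℝ A] [PartialOrder A]
    (e : A) (he : e ≠ 0)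
    (haddle : ∀ a b c : A, a ≤ b → a + c ≤ b + c)
    (hsmulle : ∀ (r : ℝ) (a : A), 0 ≤ r → 0 ≤ a → 0 ≤ r • a)
    (hunit : ∀ a : A, ∃ r : ℝ, a ≤ r • e)
    (hnorm : ∀ a : A, ‖a‖ = sInf {r : ℝ | 0 ≤ r ∧ -(r • e) ≤ a ∧ a ≤ r • e})
    (g : A →L[ℝ] ℝ) (hge : g e = 0) (hgn : ‖g‖ ≤ 1) :
    ∃ μ ν : A →L[ℝ] ℝ, IsState e μ ∧ IsState e ν ∧ ∀ x, μ x - ν x = g x := by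
  classical
  -- order basics
  have hsub : ∀ x y : A, x ≤ y ↔ 0 ≤ y - x := by
    intro x y
    constructor
    · intro h
      have := haddle x y (-x) h
      simpa [sub_eq_add_neg] using this
    · intro h
      have := haddle 0 (y - x) x h
      simpa using this
  have hadd2 : ∀ x y z w : A, x ≤ y → z ≤ w → x + z ≤ y + w := by
    intro x y z w h1 h2
    calc x + z ≤ y + z := haddle _ _ _ h1
      _ = z + y := add_comm _ _
      _ ≤ w + y := haddle _ _ _ h2
      _ = y + w := add_comm _ _
  have hsmul' : ∀ (t : ℝ) (x y : A), 0 ≤ t → x ≤ y → t • x ≤ t • y := by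
    intro t x y ht h
    have h2 := hsmulle t (y - x) ht ((hsub x y).1 h)
    rw [smul_sub] at h2
    exact (hsub _ _).2 h2
  -- e ≥ 0
  have hepos : 0 ≤ e := by
    have hne : ‖e‖ ≠ 0 := by simpa using he
    have hSne : {r : ℝ | 0 ≤ r ∧ -(r • e) ≤ e ∧ e ≤ r • e}.Nonempty := by
      by_contra h
      rw [Set.not_nonempty_iff_eq_empty] at h
      have h2 := hnorm e
      rw [h, Real.sInf_empty] at h2
      exact hne h2
    obtain ⟨r, hr0, hr1, _⟩ := hSne
    have h1 : (0:A) ≤ (1 + r) • e := by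
      have h3 := (hsub _ _).1 hr1
      rw [sub_neg_eq_add] at h3
      have heq : e + r • e = (1 + r) • e := by rw [add_smul, one_smul]
      rwa [heq] at h3
    have hr1' : (0:ℝ) < 1 + r := by linarith
    have h2 := hsmulle (1+r)⁻¹ _ (inv_nonneg.2 hr1'.le) h1
    rwa [smul_smul, inv_mul_cancel₀ hr1'.ne', one_smul] at h2
  have hre : ∀ t : ℝ, 0 ≤ t • e → 0 ≤ t := by
    intro t ht
    by_contra h
    push_neg at h
    have hpos : (0:ℝ) ≤ -t⁻¹ := by
      have : t⁻¹ < 0 := inv_neg''.2 h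
      linarith
    have h2 := hsmulle (-t⁻¹) _ hpos ht
    rw [smul_smul] at h2
    have h3 : -t⁻¹ * t = -1 := by
      rw [neg_mul, inv_mul_cancel₀ (ne_of_lt h)]
    rw [h3, neg_one_smul] at h2
    have h4 : e ≤ 0 := by
      refine (hsub e 0).2 ?_
      simpa using h2
    exact he (le_antisymm h4 hepos)
  have hmono : ∀ s t : ℝ, s ≤ t → s • e ≤ t • e := by
    intro s t h
    have h2 := hsmulle (t - s) e (by linarith) hepos
    rw [sub_smul] at h2
    exact (hsub _ _).2 h2
  have hcomp : ∀ s t : ℝ, s • e ≤ t • e → s ≤ t := by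
    intro s t h
    have h0 : 0 ≤ (t - s) • e := by
      rw [sub_smul]; exact (hsub _ _).1 h
    linarith [hre _ h0]
  -- the sublinear functional p
  have hPlb : ∀ x : A, ∃ s : ℝ, s • e ≤ x := by
    intro x
    obtain ⟨u, hu⟩ := hunit (-x)
    refine ⟨-u, ?_⟩
    have h1 := (hsub _ _).1 hu
    rw [sub_neg_eq_add] at h1
    rw [neg_smul]
    refine (hsub _ _).2 ?_
    rw [sub_neg_eq_add]
    rwa [add_comm] at h1
  have hPbdd : ∀ x : A, BddBelow {t : ℝ | x ≤ t • e} := by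
    intro x
    obtain ⟨s, hs⟩ := hPlb x
    exact ⟨s, fun t ht => hcomp s t (le_trans hs ht)⟩
  have hPne : ∀ x : A, {t : ℝ | x ≤ t • e}.Nonempty := fun x => hunit x
  set p : A → ℝ := fun x => sInf {t : ℝ | x ≤ t • e} with hpdef
  have hple : ∀ (x : A) (t : ℝ), x ≤ t • e → p x ≤ t := fun x t h => csInf_le (hPbdd x) h
  have hlep : ∀ (x : A) (δ : ℝ), 0 < δ → x ≤ (p x + δ) • e := by
    intro x δ hδ
    obtain ⟨t, ht, htlt⟩ := Real.lt_sInf_add_pos (hPne x) hδ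
    exact le_trans ht (hmono t _ htlt.le)
  have hplb : ∀ (x : A) (s : ℝ), s • e ≤ x → s ≤ p x := by
    intro x s hs
    exact le_csInf (hPne x) (fun t ht => hcomp s t (le_trans hs ht))
  have hpadd : ∀ x y : A, p (x + y) ≤ p x + p y := by
    intro x y
    refine le_of_forall_pos_le_add ?_
    intro ε hε
    have h1 := hlep x (ε/2) (by linarith)
    have h2 := hlep y (ε/2) (by linarith)
    have h3 : x + y ≤ (p x + ε/2 + (p y + ε/2)) • e := by
      rw [add_smul]; exact hadd2 _ _ _ _ h1 h2
    have h4 := hple _ _ h3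
    linarith
  have hpsmul_e : ∀ (x : A) (t : ℝ), p (x + t • e) = p x + t := by
    have key : ∀ (x : A) (t : ℝ), p (x + t • e) ≤ p x + t := by
      intro x t
      refine le_of_forall_pos_le_add ?_
      intro ε hε
      have h1 := hlep x ε hε
      have h3 : x + t • e ≤ (p x + ε + t) • e := by
        rw [add_smul]
        exact hadd2 _ _ _ _ h1 le_rfl
      have h4 := hple _ _ h3
      linarith
    intro x t
    refine le_antisymm (key x t) ?_
    have h5 := key (x + t • e) (-t)
    have hx : x + t • e + (-t) • e = x := by
      rw [neg_smul, add_neg_cancel_right]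
    rw [hx] at h5
    linarith
  have hp0 : p 0 = 0 := by
    refine le_antisymm (hple 0 0 (by simp)) (hplb 0 0 (by simp))
  have hpe : p e = 1 := by
    refine le_antisymm (hple e 1 (by rw [one_smul])) (hplb e 1 (by rw [one_smul]))
  set m : A → ℝ := fun x => -p (-x) with hmdef
  have hmle : ∀ x, m x ≤ p x := by
    intro x
    have h1 := hpadd x (-x)
    rw [add_neg_cancel, hp0] at h1
    simp only [hmdef]
    linarith
  have hm_e : ∀ (x : A) (t : ℝ), m (x + t • e) = m x + t := by
    intro x t
    simp only [hmdef]
    have h1 : -(x + t • e) = -x + (-t) • e := by rw [neg_smul]; abel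
    rw [h1, hpsmul_e]
    ring
  have hpsmul : ∀ (c : ℝ), 0 < c → ∀ x, p (c • x) ≤ c * p x := by
    intro c hc x
    refine le_of_forall_pos_le_add ?_
    intro ε hε
    have h1 := hlep x (ε / c) (by positivity)
    have h2 := hsmul' c _ _ hc.le h1
    rw [smul_smul] at h2
    have h3 := hple _ _ h2
    have h4 : c * (ε / c) = ε := by
      rw [mul_div_assoc']
      exact mul_div_cancel_left₀ ε hc.ne'
    nlinarith [h3, h4]
  have hpsmul_eq : ∀ (c : ℝ), 0 < c → ∀ x, p (c • x) = c * p x := by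
    intro c hc x
    refine le_antisymm (hpsmul c hc x) ?_
    have h1 := hpsmul c⁻¹ (by positivity) (c • x)
    rw [smul_smul, inv_mul_cancel₀ hc.ne', one_smul] at h1
    have h2 := mul_le_mul_of_nonneg_left h1 hc.le
    rw [← mul_assoc, mul_inv_cancel₀ hc.ne', one_mul] at h2
    exact h2
  have hpnorm : ∀ x, p x ≤ ‖x‖ := by
    intro x
    rw [hnorm x]
    have hne2 : {r : ℝ | 0 ≤ r ∧ -(r • e) ≤ x ∧ x ≤ r • e}.Nonempty := by
      obtain ⟨t, ht⟩ := hunit x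
      obtain ⟨s, hs⟩ := hPlb x
      refine ⟨max (max t (-s)) 0, le_max_right _ _, ?_, ?_⟩
      · rw [← neg_smul]
        refine le_trans (hmono _ s ?_) hs
        have : -s ≤ max (max t (-s)) 0 := le_trans (le_max_right t (-s)) (le_max_left _ _)
        linarith
      · exact le_trans ht (hmono _ _ (le_trans (le_max_left t (-s)) (le_max_left _ _)))
    exact le_csInf hne2 (fun r hr => hple x r hr.2.2)
  have hmaxnn : ∀ x, 0 ≤ max (p x) (-(m x)) := by
    intro x
    rcases le_or_gt 0 (p x) with h | h
    · exact le_trans h (le_max_left _ _)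
    · have h2 := hmle x
      exact le_trans (by linarith : (0:ℝ) ≤ -(m x)) (le_max_right _ _)
  have hnormle : ∀ x, ‖x‖ ≤ max (p x) (-(m x)) := by
    intro x
    refine le_of_forall_pos_le_add ?_
    intro ε hε
    set r := max (p x) (-(m x)) + ε with hrdef
    have hr0 : 0 ≤ r := by
      have := hmaxnn x
      simp only [hrdef]; linarith
    have h1 : x ≤ r • e := by
      refine le_trans (hlep x ε hε) (hmono _ _ ?_)
      have := le_max_left (p x) (-(m x))
      simp only [hrdef]; linarith
    have h2 : -(r • e) ≤ x := by
      have h3 := hlep (-x) ε hε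
      have h4 : -x ≤ r • e := by
        refine le_trans h3 (hmono _ _ ?_)
        have h5 : p (-x) = -(m x) := by simp only [hmdef]; ring
        have := le_max_right (p x) (-(m x))
        simp only [hrdef]
        linarith [h5.le, h5.ge]
      have h6 := (hsub _ _).1 h4
      rw [sub_neg_eq_add] at h6
      refine (hsub _ _).2 ?_
      rw [sub_neg_eq_add]
      rwa [add_comm] at h6
    have h7 : ‖x‖ ≤ r := by
      rw [hnorm x]
      exact csInf_le ⟨0, fun y hy => hy.1⟩ ⟨hr0, h2, h1⟩
    simpa [hrdef] using h7
  have hme : m e = 1 := by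
    simp only [hmdef]
    have h1 : -e = 0 + (-1 : ℝ) • e := by
      rw [neg_smul, one_smul, zero_add]
    rw [h1, hpsmul_e, hp0]
    ring
  have hnorme : ‖e‖ = 1 := by
    refine le_antisymm ?_ ?_
    · have h1 := hnormle e
      rw [hpe, hme] at h1
      simpa using h1
    · calc (1:ℝ) = p e := hpe.symm
        _ ≤ ‖e‖ := hpnorm e
  -- the key bound on g
  have hg2 : ∀ z, |g z| ≤ (p z - m z) / 2 := by
    intro z
    set t := (p z + m z) / 2 with htdef
    have h1 : g z = g (z - t • e) := by
      rw [map_sub, map_smul, hge]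
      simp
    have heq : z - t • e = z + (-t) • e := by
      rw [neg_smul, ← sub_eq_add_neg]
    have e1 : p (z - t • e) = p z - t := by
      rw [heq, hpsmul_e]; ring
    have e2 : m (z - t • e) = m z - t := by
      rw [heq, hm_e]; ring
    rw [h1]
    calc |g (z - t • e)| = ‖g (z - t • e)‖ := (Real.norm_eq_abs _).symm
      _ ≤ ‖g‖ * ‖z - t • e‖ := g.le_opNorm _
      _ ≤ 1 * ‖z - t • e‖ := mul_le_mul_of_nonneg_right hgn (norm_nonneg _)
      _ = ‖z - t • e‖ := one_mul _
      _ ≤ max (p (z - t • e)) (-(m (z - t • e))) := hnormle _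
      _ = (p z - m z) / 2 := by
          rw [e1, e2]
          have h2 : p z - t = (p z - m z) / 2 := by rw [htdef]; ring
          have h3 : -(m z - t) = (p z - m z) / 2 := by rw [htdef]; ring
          rw [h2, h3, max_self]
  have hpm : ∀ z, 0 ≤ p z - m z := fun z => by linarith [hmle z]
  -- the inf-convolution q
  set q : A → ℝ := fun x => sInf {v : ℝ | ∃ z, v = p (x - z) + p z + g z} with hqdef
  have hQne : ∀ x, {v : ℝ | ∃ z, v = p (x - z) + p z + g z}.Nonempty := fun x => ⟨_, 0, rfl⟩
  have hTlb : ∀ x z, m x ≤ p (x - z) + p z + g z := by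
    intro x z
    have h1 : m x - m z ≤ p (x - z) := by
      have h2 := hpadd (x - z) (-x)
      have heq : (x - z) + (-x) = -z := by abel
      rw [heq] at h2
      simp only [hmdef]
      linarith
    have h3 := (abs_le.1 (hg2 z)).1
    have h4 := hmle z
    generalize hP1 : p (x - z) = P1 at h1 ⊢
    generalize hP2 : p z = P2 at h3 h4 ⊢
    generalize hP3 : m z = P3 at h1 h3 h4
    generalize hP4 : m x = P4 at h1 ⊢
    generalize hP5 : g z = P5 at h3 ⊢
    linarith
  have hQbdd : ∀ x, BddBelow {v : ℝ | ∃ z, v = p (x - z) + p z + g z} := by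
    intro x
    exact ⟨m x, by rintro v ⟨z, rfl⟩; exact hTlb x z⟩
  have hqlb : ∀ x, m x ≤ q x := fun x =>
    le_csInf (hQne x) (by rintro v ⟨z, rfl⟩; exact hTlb x z)
  have hqle : ∀ x z, q x ≤ p (x - z) + p z + g z := fun x z => csInf_le (hQbdd x) ⟨z, rfl⟩
  have hqp : ∀ x, q x ≤ p x := by
    intro x
    have h1 := hqle x 0
    simpa [hp0, sub_zero] using h1
  have hqpg : ∀ x, q x ≤ p x + g x := by
    intro x
    have h1 := hqle x x
    simpa [hp0, sub_self] using h1
  have hqadd : ∀ x y, q (x + y) ≤ q x + q y := by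
    intro x y
    refine le_of_forall_pos_le_add ?_
    intro ε hε
    obtain ⟨v1, hv1mem, hv1⟩ := Real.lt_sInf_add_pos (hQne x) (half_pos hε)
    obtain ⟨v2, hv2mem, hv2⟩ := Real.lt_sInf_add_pos (hQne y) (half_pos hε)
    obtain ⟨z1, rfl⟩ := hv1mem
    obtain ⟨z2, rfl⟩ := hv2mem
    have h1 : q (x + y) ≤ p (x + y - (z1 + z2)) + p (z1 + z2) + g (z1 + z2) := hqle _ _
    have h5 : p (x + y - (z1 + z2)) ≤ p (x - z1) + p (y - z2) := by
      have heq : x + y - (z1 + z2) = (x - z1) + (y - z2) := by abel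
      rw [heq]; exact hpadd _ _
    have h6 : p (z1 + z2) ≤ p z1 + p z2 := hpadd _ _
    have h7 : g (z1 + z2) = g z1 + g z2 := map_add _ _ _
    rw [h7] at h1
    simp only [hqdef] at hv1 hv2 ⊢
    linarith
  have hqsmul : ∀ c : ℝ, 0 < c → ∀ x, q (c • x) = c * q x := by
    have key : ∀ c : ℝ, 0 < c → ∀ x, q (c • x) ≤ c * q x := by
      intro c hc x
      refine le_of_forall_pos_le_add ?_
      intro ε hε
      obtain ⟨v, hvmem, hv⟩ := Real.lt_sInf_add_pos (hQne x) (show (0:ℝ) < ε / c by positivity)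
      obtain ⟨z, rfl⟩ := hvmem
      have h1 : q (c • x) ≤ p (c • x - c • z) + p (c • z) + g (c • z) := hqle _ _
      have h2 : p (c • x - c • z) = c * p (x - z) := by rw [← smul_sub, hpsmul_eq c hc]
      have h3 : p (c • z) = c * p z := hpsmul_eq c hc z
      have h4 : g (c • z) = c * g z := by rw [map_smul, smul_eq_mul]
      rw [h2, h3, h4] at h1
      have hv' : p (x - z) + p z + g z < q x + ε / c := hv
      have hmul := mul_le_mul_of_nonneg_left hv'.le hc.le
      have hid : c * (ε / c) = ε := by
        rw [mul_div_assoc']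
        exact mul_div_cancel_left₀ ε hc.ne'
      nlinarith [h1, hmul, hid]
    intro c hc x
    refine le_antisymm (key c hc x) ?_
    have h1 := key c⁻¹ (by positivity) (c • x)
    rw [smul_smul, inv_mul_cancel₀ hc.ne', one_smul] at h1
    have h2 := mul_le_mul_of_nonneg_left h1 hc.le
    rw [← mul_assoc, mul_inv_cancel₀ hc.ne', one_mul] at h2
    exact h2
  -- Hahn-Banach extension
  set f : A →ₗ.[ℝ] ℝ := LinearPMap.mkSpanSingleton e 1 he with hfdef
  have hdom : ∀ x : f.domain, f x ≤ q (x : A) := by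
    rintro ⟨x, hx⟩
    have hx' : x ∈ Submodule.span ℝ {e} := hx
    rw [Submodule.mem_span_singleton] at hx'
    obtain ⟨t, ht⟩ := hx'
    subst ht
    have hval : f ⟨t • e, hx⟩ = t • (1:ℝ) :=
      LinearPMap.mkSpanSingleton'_apply e (1:ℝ) _ t hx
    rw [hval, smul_eq_mul, mul_one]
    have h1 : m (t • e) = t := by
      have h2 : t • e = 0 + t • e := by rw [zero_add]
      rw [h2, hm_e]
      simp only [hmdef, neg_zero, hp0]
      ring
    calc t = m (t • e) := h1.symm
      _ ≤ q (t • e) := hqlb _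
  obtain ⟨μ', hμ'ext, hμ'q⟩ := exists_extension_of_le_sublinear f q
    (fun c hc x => hqsmul c hc x) hqadd hdom
  have hμ'e : μ' e = 1 := by
    have h1 := hμ'ext ⟨e, Submodule.mem_span_singleton_self e⟩
    rw [h1]
    exact LinearPMap.mkSpanSingleton_apply ℝ ℝ he 1
  have hμ'b : ∀ x, |μ' x| ≤ ‖x‖ := by
    intro x
    rw [abs_le]
    constructor
    · have h1 := le_trans (hμ'q (-x)) (le_trans (hqp (-x)) (hpnorm (-x)))
      rw [map_neg, norm_neg] at h1
      linarith
    · exact le_trans (hμ'q x) (le_trans (hqp x) (hpnorm x))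
  have hν'b : ∀ x, |μ' x - g x| ≤ ‖x‖ := by
    intro x
    rw [abs_le]
    constructor
    · have h1 := le_trans (hμ'q (-x)) (hqpg (-x))
      rw [map_neg] at h1
      have h2 := le_trans (le_of_eq rfl) (hpnorm (-x))
      rw [norm_neg] at h2
      have h3 : p (-x) ≤ ‖x‖ := by rw [← norm_neg x]; exact hpnorm (-x)
      have h4 : g (-x) = -g x := map_neg g x
      rw [h4] at h1
      linarith
    · have h1 := le_trans (hμ'q x) (hqpg x)
      have h3 : p x ≤ ‖x‖ := hpnorm x
      linarith
  set μ : A →L[ℝ] ℝ := LinearMap.mkContinuous μ' 1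
    (fun x => by rw [one_mul, Real.norm_eq_abs]; exact hμ'b x) with hμdef
  have hμapp : ∀ x, μ x = μ' x := fun x => rfl
  set ν : A →L[ℝ] ℝ := μ - g with hνdef
  have hνapp : ∀ x, ν x = μ' x - g x := fun x => rfl
  have hμe : μ e = 1 := hμ'e
  have hνe : ν e = 1 := by rw [hνapp, hge, hμ'e, sub_zero]
  have hμn : ‖μ‖ = 1 := by
    refine le_antisymm (LinearMap.mkContinuous_norm_le μ' zero_le_one _) ?_
    have h1 : (1:ℝ) = ‖μ e‖ := by rw [hμe]; simp
    calc (1:ℝ) = ‖μ e‖ := h1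
      _ ≤ ‖μ‖ * ‖e‖ := μ.le_opNorm e
      _ = ‖μ‖ := by rw [hnorme, mul_one]
  have hνn : ‖ν‖ = 1 := by
    refine le_antisymm ?_ ?_
    · refine ContinuousLinearMap.opNorm_le_bound ν zero_le_one (fun x => ?_)
      rw [one_mul, Real.norm_eq_abs, hνapp]
      exact hν'b x
    · calc (1:ℝ) = ‖ν e‖ := by rw [hνe]; simp
        _ ≤ ‖ν‖ * ‖e‖ := ν.le_opNorm e
        _ = ‖ν‖ := by rw [hnorme, mul_one]
  exact ⟨μ, ν, ⟨hμe, hμn⟩, ⟨hνe, hνn⟩, fun x => by rw [hμapp, hνapp]; ring⟩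

theorem stmt_10 {A : Type*} [NormedAddCommGroup A] [NormedSpace ℝ A] [PartialOrder A]
    (e : A) (he : e ≠ 0)
    (haddle : ∀ a b c : A, a ≤ b → a + c ≤ b + c)
    (hsmulle : ∀ (r : ℝ) (a : A), 0 ≤ r → 0 ≤ a → 0 ≤ r • a)
    (hunit : ∀ a : A, ∃ r : ℝ, a ≤ r • e)
    (harch : ∀ a : A, (∀ r : ℝ, 0 < r → a ≤ r • e) → a ≤ 0)
    (hnorm : ∀ a : A, ‖a‖ = sInf {r : ℝ | 0 ≤ r ∧ -(r • e) ≤ a ∧ a ≤ r • e})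
    (L : A → ℝ)
    (hLadd : ∀ a b : A, L (a + b) ≤ L a + L b)
    (hLsmul : ∀ (t : ℝ) (a : A), L (t • a) = |t| * L a)
    (hLnull : ∀ a : A, L a = 0 ↔ ∃ t : ℝ, a = t • e)
    (hlsc : IsClosed {a : A | L a ≤ 1})
    (a : A) :
    ENNReal.ofReal (L a) =
      ⨆ (μ : A →L[ℝ] ℝ) (ν : A →L[ℝ] ℝ) (_ : IsState e μ) (_ : IsState e ν) (_ : μ ≠ ν),
        ENNReal.ofReal |μ a - ν a| / rhoL L μ ν := by
  classical
  have hL0 : L 0 = 0 := by simpa using hLsmul 0 0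
  have hLneg : ∀ x : A, L (-x) = L x := fun x => by simpa using hLsmul (-1) x
  have hLnonneg : ∀ x : A, 0 ≤ L x := by
    intro x
    have h := hLadd x (-x)
    rw [add_neg_cancel, hL0, hLneg] at h
    linarith
  have hLe : ∀ t : ℝ, L (t • e) = 0 := fun t => (hLnull _).mpr ⟨t, rfl⟩
  refine le_antisymm ?_ ?_
  · -- hard direction : ofReal (L a) ≤ sup
    refine le_of_forall_lt (fun c hc => ?_)
    have hLa : 0 < L a := by
      by_contra h
      push_neg at h
      rw [ENNReal.ofReal_eq_zero.2 h] at hc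
      simp at hc
    have hcne : c ≠ ⊤ := ne_top_of_lt hc
    have hc' : c.toReal < L a := (ENNReal.lt_ofReal_iff_toReal_lt hcne).1 hc
    set r : ℝ := (max c.toReal 0 + L a) / 2 with hrdef
    have hmax0 : (0:ℝ) ≤ max c.toReal 0 := le_max_right _ _
    have hmaxlt : max c.toReal 0 < L a := max_lt hc' hLa
    have hr1 : 0 < r := by rw [hrdef]; linarith
    have hr2 : r < L a := by rw [hrdef]; linarith
    have hcr : c < ENNReal.ofReal r := by
      refine (ENNReal.lt_ofReal_iff_toReal_lt hcne).2 ?_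
      have := le_max_left c.toReal 0
      rw [hrdef]; linarith
    -- separation
    have hDconv : Convex ℝ {b : A | L b ≤ 1} := by
      intro x hx y hy s t hs0 ht0 hst
      simp only [Set.mem_setOf_eq] at *
      calc L (s • x + t • y) ≤ L (s • x) + L (t • y) := hLadd _ _
        _ = s * L x + t * L y := by
            rw [hLsmul, hLsmul, abs_of_nonneg hs0, abs_of_nonneg ht0]
        _ ≤ s * 1 + t * 1 := by
            exact add_le_add (mul_le_mul_of_nonneg_left hx hs0)
              (mul_le_mul_of_nonneg_left hy ht0)
        _ = 1 := by rw [mul_one, mul_one, hst]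
    have hna : r⁻¹ • a ∉ {b : A | L b ≤ 1} := by
      simp only [Set.mem_setOf_eq, hLsmul, abs_of_pos (inv_pos.2 hr1), not_le]
      rw [inv_mul_eq_div]
      exact (one_lt_div hr1).2 hr2
    obtain ⟨f, u, hfD, hfa⟩ := geometric_hahn_banach_closed_point hDconv hlsc hna
    have hu0 : 0 < u := by
      have := hfD 0 (by simp [hL0])
      simpa using this
    have hfe : f e = 0 := by
      by_contra h
      have h1 : ∀ t : ℝ, t * f e < u := by
        intro t
        have := hfD (t • e) (by simp [hLe t])
        simpa [map_smul, smul_eq_mul] using this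
      have h2 := h1 (2 * u / f e)
      rw [div_mul_cancel₀ _ h] at h2
      linarith
    have hDb : ∀ b, L b ≤ 1 → |f b| < u := by
      intro b hb
      have h1 := hfD b hb
      have h2 := hfD (-b) (by simp only [Set.mem_setOf_eq]; rwa [hLneg])
      rw [map_neg] at h2
      rw [abs_lt]
      constructor <;> linarith
    set lam : A →L[ℝ] ℝ := u⁻¹ • f with hlamdef
    have hlam_app : ∀ x, lam x = u⁻¹ * f x := fun x => rfl
    have hlam_e : lam e = 0 := by rw [hlam_app, hfe, mul_zero]
    have hlam_a : r < lam a := by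
      have h1 : u < r⁻¹ * f a := by
        have := hfa
        rwa [map_smul, smul_eq_mul] at this
      have h2 : u * r < f a := by
        have h3 := mul_lt_mul_of_pos_left h1 hr1
        rw [← mul_assoc, mul_inv_cancel₀ hr1.ne', one_mul] at h3
        linarith
      rw [hlam_app, inv_mul_eq_div]
      exact (lt_div_iff₀ hu0).2 (by linarith)
    have hlamD : ∀ b, L b ≤ 1 → |lam b| ≤ 1 := by
      intro b hb
      have h1 := (hDb b hb).le
      rw [hlam_app, abs_mul, abs_inv, abs_of_pos hu0]
      calc u⁻¹ * |f b| ≤ u⁻¹ * u := mul_le_mul_of_nonneg_left h1 (inv_nonneg.2 hu0.le)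
        _ = 1 := inv_mul_cancel₀ hu0.ne'
    set c0 : ℝ := ‖lam‖ + 1 with hc0def
    have hc0 : 0 < c0 := by
      have := norm_nonneg lam
      rw [hc0def]; linarith
    set g : A →L[ℝ] ℝ := c0⁻¹ • lam with hgdef
    have hg_app : ∀ x, g x = c0⁻¹ * lam x := fun x => rfl
    have hge : g e = 0 := by rw [hg_app, hlam_e, mul_zero]
    have hgn : ‖g‖ ≤ 1 := by
      refine ContinuousLinearMap.opNorm_le_bound g zero_le_one (fun x => ?_)
      rw [hg_app, Real.norm_eq_abs, abs_mul, abs_inv, abs_of_pos hc0, one_mul]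
      have h1 : |lam x| ≤ ‖lam‖ * ‖x‖ := by
        rw [← Real.norm_eq_abs]; exact lam.le_opNorm x
      have h2 : ‖lam‖ * ‖x‖ ≤ c0 * ‖x‖ := by
        have h3 : ‖lam‖ ≤ c0 := by rw [hc0def]; linarith
        exact mul_le_mul_of_nonneg_right h3 (norm_nonneg x)
      calc c0⁻¹ * |lam x| ≤ c0⁻¹ * (c0 * ‖x‖) :=
            mul_le_mul_of_nonneg_left (le_trans h1 h2) (inv_nonneg.2 hc0.le)
        _ = ‖x‖ := by rw [← mul_assoc, inv_mul_cancel₀ hc0.ne', one_mul]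
    obtain ⟨μ, ν, hμ, hν, hdiff⟩ := exists_state_sub e he haddle hsmulle hunit hnorm g hge hgn
    have hlama0 : 0 < lam a := lt_trans hr1 hlam_a
    have hga0 : 0 < g a := by
      rw [hg_app]
      exact mul_pos (inv_pos.2 hc0) hlama0
    have hμν : μ ≠ ν := by
      intro h
      have h1 := hdiff a
      rw [h, sub_self] at h1
      rw [← h1] at hga0
      exact lt_irrefl 0 hga0
    have hρle : rhoL L μ ν ≤ ENNReal.ofReal c0⁻¹ := by
      rw [rhoL]
      refine iSup_le fun b => iSup_le fun hb => ?_
      rw [hdiff b]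
      apply ENNReal.ofReal_le_ofReal
      rw [hg_app, abs_mul, abs_inv, abs_of_pos hc0]
      calc c0⁻¹ * |lam b| ≤ c0⁻¹ * 1 :=
            mul_le_mul_of_nonneg_left (hlamD b hb) (inv_nonneg.2 hc0.le)
        _ = c0⁻¹ := mul_one _
    have hnum : ENNReal.ofReal (r * c0⁻¹) ≤ ENNReal.ofReal |μ a - ν a| := by
      apply ENNReal.ofReal_le_ofReal
      rw [hdiff a, hg_app, abs_mul, abs_inv, abs_of_pos hc0, abs_of_pos hlama0]
      rw [mul_comm]
      exact mul_le_mul_of_nonneg_left hlam_a.le (inv_nonneg.2 hc0.le)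
    have hdiv : ENNReal.ofReal r ≤ ENNReal.ofReal |μ a - ν a| / rhoL L μ ν := by
      have h1 : ENNReal.ofReal (r * c0⁻¹) / ENNReal.ofReal c0⁻¹ ≤
          ENNReal.ofReal |μ a - ν a| / rhoL L μ ν := ENNReal.div_le_div hnum hρle
      rw [← ENNReal.ofReal_div_of_pos (inv_pos.2 hc0)] at h1
      rw [mul_div_assoc, div_self (inv_ne_zero hc0.ne'), mul_one] at h1
      exact h1
    refine lt_of_lt_of_le hcr (le_trans hdiv ?_)
    refine le_iSup_of_le μ ?_
    refine le_iSup_of_le ν ?_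
    refine le_iSup_of_le hμ ?_
    refine le_iSup_of_le hν ?_
    exact le_iSup_of_le hμν le_rfl
  · -- easy direction : sup ≤ ofReal (L a)
    refine iSup_le fun μ => iSup_le fun ν => iSup_le fun hμ => iSup_le fun hν =>
      iSup_le fun hμν => ?_
    rcases eq_or_lt_of_le (hLnonneg a) with h0 | hpos
    · obtain ⟨t, rfl⟩ := (hLnull a).1 h0.symm
      have h1 : μ (t • e) - ν (t • e) = 0 := by
        rw [map_smul, map_smul, hμ.1, hν.1, sub_self]
      rw [h1]
      simp
    · apply ENNReal.div_le_of_le_mul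
      have hb : L ((L a)⁻¹ • a) ≤ 1 := by
        rw [hLsmul, abs_of_pos (inv_pos.2 hpos), inv_mul_cancel₀ hpos.ne']
      have hρ : ENNReal.ofReal |μ ((L a)⁻¹ • a) - ν ((L a)⁻¹ • a)| ≤ rhoL L μ ν := by
        rw [rhoL]
        exact le_iSup₂_of_le ((L a)⁻¹ • a) hb le_rfl
      have hval : |μ ((L a)⁻¹ • a) - ν ((L a)⁻¹ • a)| = |μ a - ν a| / L a := by
        rw [map_smul, map_smul, smul_eq_mul, smul_eq_mul, ← mul_sub, abs_mul, abs_inv,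
          abs_of_pos hpos, inv_mul_eq_div]
      rw [hval] at hρ
      calc ENNReal.ofReal |μ a - ν a|
          = ENNReal.ofReal (L a * (|μ a - ν a| / L a)) := by
            rw [mul_comm, div_mul_cancel₀ _ hpos.ne']
        _ = ENNReal.ofReal (L a) * ENNReal.ofReal (|μ a - ν a| / L a) :=
            ENNReal.ofReal_mul (hLnonneg a)
        _ ≤ ENNReal.ofReal (L a) * rhoL L μ ν := mul_le_mul_right hρ _
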